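/- Let γ > 0 and let h : [0,∞) → ℝ be C¹ with h(0) = 0, lim_{x→∞} h(x)/√x = +∞ and lim_{x→∞} x·h'(x)/h(x)² = 0. Let J(x) := ∫₀ˣ 2h(z)/(γz) dz and u(x) := ∫ₓ^∞ e^{−J(z)} dz. Then h(y) + γ·y·u'(y)/u(y) is asymptotically equivalent to −h(y) as y → ∞; equivalently, lim_{y→∞} (γ·y·u'(y)/u(y)) / h(y) = −2. -/

import Mathlib

open Filter Set Topology MeasureTheory

/-- Let `γ > 0` and let `h : [0,∞) → ℝ` be `C¹` with `h(0) = 0`,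
`h(x)/√x → +∞` and `x h'(x)/h(x)² → 0` as `x → ∞`. With `J(x) = ∫₀ˣ 2h(z)/(γz) dz` and
`u(x) = ∫ₓ^∞ e^{−J(z)} dz`, the drift of the conditioned process satisfies
`h(y) + γ y u'(y)/u(y) ∼ −h(y)` as `y → ∞`; equivalently,
`(γ y u'(y)/u(y)) / h(y) → −2`. -/
theorem conditioned_drift_asymptotics (γ : ℝ) (hγ : 0 < γ) (h h' : ℝ → ℝ)
    (hderiv : ∀ x ∈ Set.Ici (0:ℝ), HasDerivWithinAt h (h' x) (Set.Ici 0) x)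
    (hcont : ContinuousOn h' (Set.Ici 0))
    (h0 : h 0 = 0)
    (hh1 : Tendsto (fun x => h x / Real.sqrt x) atTop atTop)
    (hh2 : Tendsto (fun x => x * h' x / (h x) ^ 2) atTop (𝓝 0))
    (J u : ℝ → ℝ)
    (hJ : ∀ x, J x = ∫ z in (0:ℝ)..x, 2 * h z / (γ * z))
    (hu : ∀ x, u x = ∫ z in Set.Ioi x, Real.exp (-(J z))) :
    Tendsto (fun y => (γ * y * deriv u y / u y) / h y) atTop (𝓝 (-2)) := by
  have hγ' : γ ≠ 0 := ne_of_gt hγ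
  set g : ℝ → ℝ := fun z => Real.exp (-(J z)) with hg_def
  set f : ℝ → ℝ := fun z => 2 * h z / (γ * z) with hf_def
  set φ : ℝ → ℝ := fun z => γ * z / (2 * h z) with hφ_def
  set ψ : ℝ → ℝ := fun z => (γ * (2 * h z) - γ * z * (2 * h' z)) / (2 * h z) ^ 2 with hψ_def
  -- basic continuity / differentiability of h
  have hcOn : ContinuousOn h (Ici 0) := fun x hx => (hderiv x hx).continuousWithinAt
  have hhx : ∀ x : ℝ, 0 < x → HasDerivAt h (h' x) x := fun x hx =>
    (hderiv x (le_of_lt hx)).hasDerivAt (Ici_mem_nhds hx)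
  -- sqrt tendsto
  have hsq : Tendsto Real.sqrt atTop atTop := by
    refine tendsto_atTop.2 fun b => ?_
    filter_upwards [eventually_ge_atTop (b^2)] with x h1
    calc b ≤ |b| := le_abs_self b
      _ = Real.sqrt (b^2) := (Real.sqrt_sq_eq_abs b).symm
      _ ≤ Real.sqrt x := Real.sqrt_le_sqrt h1
  have hsqrt_le : ∀ᶠ x in atTop, Real.sqrt x ≤ h x := by
    filter_upwards [hh1.eventually_ge_atTop 1, eventually_gt_atTop (0:ℝ)] with x hx hx0
    have hs : 0 < Real.sqrt x := Real.sqrt_pos.2 hx0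
    calc Real.sqrt x = 1 * Real.sqrt x := (one_mul _).symm
      _ ≤ (h x / Real.sqrt x) * Real.sqrt x := by
          exact mul_le_mul_of_nonneg_right hx hs.le
      _ = h x := div_mul_cancel₀ _ (ne_of_gt hs)
  have hhtop : Tendsto h atTop atTop :=
    tendsto_atTop_mono' _ hsqrt_le hsq
  -- slope at 0
  have hslope : Tendsto (fun z => h z / z) (𝓝[>] (0:ℝ)) (𝓝 (h' 0)) := by
    have H := hderiv 0 self_mem_Ici
    rw [hasDerivWithinAt_iff_tendsto_slope, Ici_sdiff_left] at H
    refine H.congr fun z => ?_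
    simp [slope_def_field, div_eq_inv_mul, h0]
  -- integrability of f on [0, x]
  have hf_contOn : ContinuousOn f (Ioi 0) := by
    refine ContinuousOn.div ?_ ?_ fun z hz => mul_ne_zero hγ' (ne_of_gt hz)
    · exact continuousOn_const.mul (hcOn.mono Ioi_subset_Ici_self)
    · exact (continuous_const.mul continuous_id).continuousOn
  have hf_int : ∀ x : ℝ, 0 < x → IntervalIntegrable f volume 0 x := by
    intro x hx
    rw [intervalIntegrable_iff_integrableOn_Ioc_of_le hx.le]
    -- bound f on Ioc 0 x
    have h1 : ∀ᶠ z in 𝓝[>] (0:ℝ), dist (h z / z) (h' 0) < 1 :=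
      Metric.tendsto_nhds.mp hslope 1 one_pos
    obtain ⟨δ, hδmem, hδ⟩ := mem_nhdsGT_iff_exists_Ioo_subset.mp h1
    have hδ0 : 0 < δ := hδmem
    set c : ℝ := min (δ/2) x with hc_def
    have hc0 : 0 < c := lt_min (by linarith) hx
    have hcx : c ≤ x := min_le_right _ _
    have hcδ : c < δ := lt_of_le_of_lt (min_le_left _ _) (by linarith)
    obtain ⟨C, hC⟩ := (isCompact_Icc (a := c) (b := x)).exists_bound_of_continuousOn
      (hf_contOn.mono (fun z hz => lt_of_lt_of_le hc0 hz.1))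
    set C' : ℝ := max C (2 / γ * (|h' 0| + 1)) with hC'_def
    have hbound : ∀ z ∈ Ioc 0 x, ‖f z‖ ≤ C' := by
      intro z hz
      rcases lt_or_ge z δ with hzδ | hzδ
      · have hmem : z ∈ Ioo 0 δ := ⟨hz.1, hzδ⟩
        have hdist : dist (h z / z) (h' 0) < 1 := hδ hmem
        have hz0 : z ≠ 0 := ne_of_gt hz.1
        have habs : |h z / z| ≤ |h' 0| + 1 := by
          have := abs_sub_abs_le_abs_sub (h z / z) (h' 0)
          rw [Real.dist_eq] at hdist
          linarith [this, le_of_lt hdist]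
        have hfz : f z = 2 / γ * (h z / z) := by
          simp only [hf_def]; field_simp
        rw [hfz]
        calc ‖2 / γ * (h z / z)‖ = 2 / γ * |h z / z| := by
              rw [norm_mul, Real.norm_eq_abs, Real.norm_eq_abs,
                abs_of_pos (by positivity : (0:ℝ) < 2 / γ)]
          _ ≤ 2 / γ * (|h' 0| + 1) := by
              exact mul_le_mul_of_nonneg_left habs (by positivity)
          _ ≤ C' := le_max_right _ _
      · have hmem : z ∈ Icc c x := ⟨le_trans hcδ.le hzδ, hz.2⟩
        exact le_trans (hC z hmem) (le_max_left _ _)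
    refine Integrable.mono' (g := fun _ => C')
      (integrableOn_const measure_Ioc_lt_top.ne) ?_ ?_
    · exact (hf_contOn.mono Ioc_subset_Ioi_self).aestronglyMeasurable measurableSet_Ioc
    · exact (ae_restrict_iff' measurableSet_Ioc).2 (ae_of_all _ hbound)
  -- derivative of J
  have hJfun : J = fun x => ∫ z in (0:ℝ)..x, f z := funext hJ
  have hJd : ∀ x : ℝ, 0 < x → HasDerivAt J (f x) x := by
    intro x hx
    rw [hJfun]
    exact intervalIntegral.integral_hasDerivAt_right (hf_int x hx)
      (hf_contOn.stronglyMeasurableAtFilter isOpen_Ioi x hx)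
      ((hf_contOn x hx).continuousAt (Ioi_mem_nhds hx))
  have hJcont : ContinuousOn J (Ioi 0) := fun x hx =>
    (hJd x hx).continuousAt.continuousWithinAt
  have hg_pos : ∀ z, 0 < g z := fun z => Real.exp_pos _
  have hg_contOn : ContinuousOn g (Ioi 0) := by
    exact (hJcont.neg).rexp
  -- J beats 2 log
  have hJlog : ∀ᶠ z in atTop, 2 * Real.log z ≤ J z := by
    obtain ⟨A₁0, hA₁0⟩ := eventually_atTop.mp hsqrt_le
    set A₁ : ℝ := max A₁0 1 with hA₁_def
    have hA₁1 : (1:ℝ) ≤ A₁ := le_max_right _ _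
    have hA₁pos : (0:ℝ) < A₁ := lt_of_lt_of_le one_pos hA₁1
    have hA₁sqrt : ∀ z, A₁ ≤ z → Real.sqrt z ≤ h z := fun z hz =>
      hA₁0 z (le_trans (le_max_left _ _) hz)
    set q : ℝ → ℝ := fun z => J z - 4 / γ * Real.sqrt z with hq_def
    have hqd : ∀ z, A₁ ≤ z → HasDerivAt q (f z - 4 / γ * (1 / (2 * Real.sqrt z))) z := by
      intro z hz
      have hz0 : 0 < z := lt_of_lt_of_le hA₁pos hz
      exact (hJd z hz0).sub ((Real.hasDerivAt_sqrt (ne_of_gt hz0)).const_mul (4/γ))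
    have hqmono : MonotoneOn q (Ici A₁) := by
      apply monotoneOn_of_deriv_nonneg (convex_Ici A₁)
      · exact fun z hz => (hqd z hz).continuousAt.continuousWithinAt
      · intro z hz
        rw [interior_Ici] at hz
        exact (hqd z hz.le).differentiableAt.differentiableWithinAt
      · intro z hz
        rw [interior_Ici] at hz
        rw [(hqd z hz.le).deriv]
        have hz0 : 0 < z := lt_of_lt_of_le hA₁pos hz.le
        have hsz : 0 < Real.sqrt z := Real.sqrt_pos.2 hz0
        have h1 : 4 / γ * (1 / (2 * Real.sqrt z)) = 2 * Real.sqrt z / (γ * z) := by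
          rw [eq_div_iff (mul_ne_zero hγ' (ne_of_gt hz0))]
          field_simp
          nlinarith [Real.mul_self_sqrt hz0.le]
        rw [h1, hf_def]
        have h2 : 2 * Real.sqrt z / (γ * z) ≤ 2 * h z / (γ * z) := by
          gcongr
          exact hA₁sqrt z hz.le
        linarith
    have haux : Tendsto (fun z => 4 / γ * Real.sqrt z - 2 * Real.log z) atTop atTop := by
      have hm : Tendsto (fun t : ℝ => 4 / γ * t ^ 2 - 8 * t) atTop atTop := by
        apply tendsto_atTop_mono' atTop _ tendsto_id
        filter_upwards [eventually_ge_atTop (9*γ/4), eventually_ge_atTop (0:ℝ)] with t h1 h2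
        have h3 : (9:ℝ) ≤ 4 / γ * t := by
          calc (9:ℝ) = 4 / γ * (9 * γ / 4) := by field_simp
            _ ≤ 4 / γ * t := by gcongr
        have := mul_nonneg h2 (sub_nonneg.2 h3)
        simp only [id_eq]
        nlinarith
      have hcomp : Tendsto (fun z => 4 / γ * (Real.sqrt (Real.sqrt z)) ^ 2
          - 8 * Real.sqrt (Real.sqrt z)) atTop atTop := hm.comp (hsq.comp hsq)
      apply tendsto_atTop_mono' atTop _ hcomp
      filter_upwards [eventually_ge_atTop (1:ℝ)] with z hz
      have hz0 : (0:ℝ) < z := lt_of_lt_of_le one_pos hz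
      have h4 : (Real.sqrt (Real.sqrt z)) ^ 2 = Real.sqrt z :=
        Real.sq_sqrt (Real.sqrt_nonneg z)
      have h5 : 1 ≤ Real.sqrt (Real.sqrt z) := by
        rw [show (1:ℝ) = Real.sqrt (Real.sqrt 1) by simp]
        exact Real.sqrt_le_sqrt (Real.sqrt_le_sqrt hz)
      have h6 : Real.log z = 4 * Real.log (Real.sqrt (Real.sqrt z)) := by
        rw [Real.log_sqrt (Real.sqrt_nonneg z), Real.log_sqrt hz0.le]; ring
      have h7 : Real.log (Real.sqrt (Real.sqrt z)) ≤ Real.sqrt (Real.sqrt z) :=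
        le_trans (Real.log_le_sub_one_of_pos (by linarith)) (by linarith)
      simp only [Function.comp_apply, h4]
      linarith
    have hc₀ : ∀ z, A₁ ≤ z → q A₁ + 4 / γ * Real.sqrt z ≤ J z := by
      intro z hz
      have := hqmono self_mem_Ici (mem_Ici.2 hz) hz
      simp only [hq_def] at this ⊢
      linarith
    filter_upwards [eventually_ge_atTop A₁, haux.eventually_ge_atTop (-(q A₁))] with z hz1 hz2
    have := hc₀ z hz1
    linarith
  have hg_bound : ∀ᶠ z in atTop, g z ≤ z ^ (-2 : ℝ) := by
    filter_upwards [hJlog, eventually_gt_atTop (0:ℝ)] with z hz hz0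
    have : z ^ (-2 : ℝ) = Real.exp (-(2 * Real.log z)) := by
      rw [Real.rpow_def_of_pos hz0]; ring_nf
    rw [this]
    exact Real.exp_le_exp.2 (by linarith)
  -- choose B
  obtain ⟨B₀, hB₀⟩ := eventually_atTop.mp (hsqrt_le.and (hhtop.eventually_ge_atTop 1 |>.and hg_bound))
  set B : ℝ := max B₀ 1 with hB_def
  have hB1 : (1:ℝ) ≤ B := le_max_right _ _
  have hB0 : (0:ℝ) < B := lt_of_lt_of_le one_pos hB1
  have hBsqrt : ∀ z, B ≤ z → Real.sqrt z ≤ h z := fun z hz =>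
    (hB₀ z (le_trans (le_max_left _ _) hz)).1
  have hBh1 : ∀ z, B ≤ z → 1 ≤ h z := fun z hz =>
    (hB₀ z (le_trans (le_max_left _ _) hz)).2.1
  have hBg : ∀ z, B ≤ z → g z ≤ z ^ (-2:ℝ) := fun z hz =>
    (hB₀ z (le_trans (le_max_left _ _) hz)).2.2
  have hBpos : ∀ z, B ≤ z → 0 < z := fun z hz => lt_of_lt_of_le hB0 hz
  have hBhpos : ∀ z, B ≤ z → 0 < h z := fun z hz => lt_of_lt_of_le one_pos (hBh1 z hz)
  -- integrability of g
  have hg_int : ∀ y, B ≤ y → IntegrableOn g (Ioi y) := by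
    have hgB : IntegrableOn g (Ioi B) := by
      refine Integrable.mono' (g := fun z => z ^ (-2:ℝ))
        (integrableOn_Ioi_rpow_of_lt (by norm_num) hB0) ?_ ?_
      · exact (hg_contOn.mono (Ioi_subset_Ioi hB0.le)).aestronglyMeasurable measurableSet_Ioi
      · refine (ae_restrict_iff' measurableSet_Ioi).2 (ae_of_all _ fun z hz => ?_)
        rw [Real.norm_eq_abs, abs_of_pos (hg_pos z)]
        exact hBg z (le_of_lt hz)
    exact fun y hy => hgB.mono_set (Ioi_subset_Ioi hy)
  -- u equals integral of g and is positive
  have hg_contB : ContinuousOn g (Ici B) :=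
    hg_contOn.mono fun z hz => lt_of_lt_of_le hB0 hz
  have hu_pos : ∀ y, B ≤ y → 0 < u y := by
    intro y hy
    rw [hu y]
    have hy0 : 0 < y := hBpos y hy
    have hpos2 : 0 < ∫ z in y..(y+1), g z := by
      apply intervalIntegral.intervalIntegral_pos_of_pos_on
      · apply ContinuousOn.intervalIntegrable
        apply hg_contB.mono
        rw [uIcc_of_le (by linarith : y ≤ y + 1)]
        exact fun z hz => le_trans hy hz.1
      · exact fun x _ => hg_pos x
      · linarith
    calc (0:ℝ) < ∫ z in y..(y+1), g z := hpos2
      _ = ∫ z in Ioc y (y+1), g z := intervalIntegral.integral_of_le (by linarith)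
      _ ≤ ∫ z in Ioi y, g z := by
          apply setIntegral_mono_set (hg_int y hy)
            (ae_of_all _ fun z => (hg_pos z).le)
          exact HasSubset.Subset.eventuallyLE Ioc_subset_Ioi_self
  -- derivative of u
  have hu_deriv : ∀ y, B < y → deriv u y = -(g y) := by
    intro y hy
    have hy0 : 0 < y := lt_trans hB0 hy
    have hgB : IntegrableOn g (Ioi B) := hg_int B le_rfl
    have hsplit : ∀ x, B < x → u x = u B - ∫ z in B..x, g z := by
      intro x hx
      have hdisj : Disjoint (Ioc B x) (Ioi x) := Ioc_disjoint_Ioi le_rfl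
      have hunion : Ioc B x ∪ Ioi x = Ioi B := Ioc_union_Ioi_eq_Ioi hx.le
      have h1 : ∫ z in Ioi B, g z = (∫ z in Ioc B x, g z) + ∫ z in Ioi x, g z := by
        rw [← hunion]
        exact setIntegral_union hdisj measurableSet_Ioi
          (hgB.mono_set (hunion ▸ subset_union_left))
          (hgB.mono_set (Ioi_subset_Ioi hx.le))
      rw [hu x, hu B, intervalIntegral.integral_of_le hx.le]
      simp only [hg_def] at h1 ⊢
      linarith
    have hev : u =ᶠ[𝓝 y] fun x => u B - ∫ z in B..x, g z :=
      (eventually_gt_nhds hy).mono hsplit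
    have hI : HasDerivAt (fun x => ∫ z in B..x, g z) (g y) y := by
      apply intervalIntegral.integral_hasDerivAt_right
      · apply ContinuousOn.intervalIntegrable
        apply hg_contB.mono
        rw [uIcc_of_le hy.le]
        exact fun z hz => hz.1
      · exact hg_contOn.stronglyMeasurableAtFilter isOpen_Ioi y hy0
      · exact (hg_contOn y hy0).continuousAt (Ioi_mem_nhds hy0)
    have hD : HasDerivAt u (0 - g y) y :=
      HasDerivAt.congr_of_eventuallyEq ((hasDerivAt_const y (u B)).sub hI) hev
    rw [hD.deriv]
    ring
  -- ψ tends to 0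
  have hψ0 : Tendsto ψ atTop (𝓝 0) := by
    have l1 : Tendsto (fun z => γ / 2 * (h z)⁻¹ - γ / 2 * (z * h' z / (h z) ^ 2))
        atTop (𝓝 0) := by
      have t1 : Tendsto (fun z => (h z)⁻¹) atTop (𝓝 0) := tendsto_inv_atTop_zero.comp hhtop
      have := (t1.const_mul (γ/2)).sub (hh2.const_mul (γ/2))
      simpa using this
    apply l1.congr'
    filter_upwards [hhtop.eventually_ge_atTop 1] with z hz
    have hz0 : h z ≠ 0 := by positivity
    simp only [hψ_def]
    field_simp
  -- derivative of F = φ * g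
  have hFd : ∀ z, B ≤ z → HasDerivAt (fun w => φ w * g w) ((ψ z - 1) * g z) z := by
    intro z hz
    have hz0 : 0 < z := hBpos z hz
    have hhz : 0 < h z := hBhpos z hz
    have hφd : HasDerivAt φ (ψ z) z := by
      have hnum : HasDerivAt (fun w => γ * w) γ z := by
        simpa using (hasDerivAt_id z).const_mul γ
      have hden : HasDerivAt (fun w => 2 * h w) (2 * h' z) z := (hhx z hz0).const_mul 2
      have := hnum.div hden (by positivity : 2 * h z ≠ 0)
      exact this
    have hgd : HasDerivAt g (Real.exp (-(J z)) * -(f z)) z := ((hJd z hz0).neg).exp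
    have := hφd.mul hgd
    refine this.congr_deriv ?_
    have hfz : φ z * f z = 1 := by
      simp only [hφ_def, hf_def]
      field_simp
    simp only [hg_def]
    have : φ z * (Real.exp (-(J z)) * -(f z)) = -(φ z * f z) * Real.exp (-(J z)) := by ring
    rw [this, hfz]
    ring
  -- φ * g tends to 0
  have hF0 : Tendsto (fun T => φ T * g T) atTop (𝓝 0) := by
    have hbig : Tendsto (fun T : ℝ => γ / 2 * (T ^ (-(3:ℝ)/2))) atTop (𝓝 0) := by
      have := (tendsto_rpow_neg_atTop (by norm_num : (0:ℝ) < 3/2)).const_mul (γ/2)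
      simpa [neg_div] using this
    apply squeeze_zero' (g := fun T => γ / 2 * (T ^ (-(3:ℝ)/2)))
    · filter_upwards [eventually_ge_atTop B] with T hT
      have := hBhpos T hT
      have := hg_pos T
      have := hBpos T hT
      positivity
    · filter_upwards [eventually_ge_atTop B, eventually_ge_atTop 1] with T hT hT1
      have hT0 : 0 < T := hBpos T hT
      have hhT : 0 < h T := hBhpos T hT
      have hsT : 0 < Real.sqrt T := Real.sqrt_pos.2 hT0
      have h1 : φ T ≤ γ / 2 * Real.sqrt T := by
        simp only [hφ_def]
        rw [div_le_iff₀ (by positivity : 0 < 2 * h T)]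
        have : γ / 2 * Real.sqrt T * (2 * h T) = γ * (Real.sqrt T * h T) := by ring
        rw [this]
        have h2 : T ≤ Real.sqrt T * h T := by
          calc T = Real.sqrt T * Real.sqrt T := (Real.mul_self_sqrt hT0.le).symm
            _ ≤ Real.sqrt T * h T := by
                exact mul_le_mul_of_nonneg_left (hBsqrt T hT) hsT.le
        calc γ * T = γ * T := rfl
          _ ≤ γ * (Real.sqrt T * h T) := by exact mul_le_mul_of_nonneg_left h2 hγ.le
      have h3 : φ T * g T ≤ γ / 2 * Real.sqrt T * (T ^ (-2:ℝ)) := by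
        apply mul_le_mul h1 (hBg T hT) (hg_pos T).le (by positivity)
      refine le_trans h3 (le_of_eq ?_)
      rw [Real.sqrt_eq_rpow]
      rw [mul_assoc, ← Real.rpow_add hT0]
      norm_num
    · exact hbig
  -- the key two-sided estimate
  have hψcont : ContinuousOn ψ (Ici B) := by
    have hsub : Ici B ⊆ Ici (0:ℝ) := fun z hz => le_trans hB0.le hz
    apply ContinuousOn.div
    · exact (continuousOn_const.mul (continuousOn_const.mul (hcOn.mono hsub))).sub
        ((continuousOn_const.mul continuousOn_id).mul
          (continuousOn_const.mul (hcont.mono hsub)))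
    · exact (continuousOn_const.mul (hcOn.mono hsub)).pow 2
    · intro z hz
      have := hBhpos z hz
      positivity
  have key : ∀ ε : ℝ, 0 < ε → ∀ᶠ y in atTop,
      (1 - ε) * u y ≤ φ y * g y ∧ φ y * g y ≤ (1 + ε) * u y := by
    intro ε hε
    have hev : ∀ᶠ z in atTop, |ψ z| ≤ ε := by
      filter_upwards [Metric.tendsto_nhds.mp hψ0 ε hε] with z hz
      rw [Real.dist_eq, sub_zero] at hz
      exact hz.le
    obtain ⟨Aε, hAε⟩ := eventually_atTop.mp hev
    filter_upwards [eventually_ge_atTop B, eventually_ge_atTop Aε] with y hyB hyA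
    have hlim1 : Tendsto (fun T => ∫ z in y..T, g z) atTop (𝓝 (u y)) := by
      rw [hu y]
      exact intervalIntegral_tendsto_integral_Ioi y (hg_int y hyB) tendsto_id
    have hineq : ∀ᶠ T in atTop,
        ((1 - ε) * ∫ z in y..T, g z) ≤ φ y * g y - φ T * g T ∧
        φ y * g y - φ T * g T ≤ (1 + ε) * ∫ z in y..T, g z := by
      filter_upwards [eventually_ge_atTop y] with T hT
      have hsubIcc : Icc y T ⊆ Ici B := fun z hz => le_trans hyB hz.1
      have hgint : IntervalIntegrable g volume y T := by
        apply ContinuousOn.intervalIntegrable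
        rw [uIcc_of_le hT]
        exact hg_contB.mono hsubIcc
      have hcont1 : ContinuousOn (fun z => (1 - ψ z) * g z) (Icc y T) :=
        ((continuousOn_const.sub (hψcont.mono hsubIcc)).mul (hg_contB.mono hsubIcc))
      have hint1 : IntervalIntegrable (fun z => (1 - ψ z) * g z) volume y T := by
        apply ContinuousOn.intervalIntegrable
        rw [uIcc_of_le hT]
        exact hcont1
      have hFint : IntervalIntegrable (fun z => (ψ z - 1) * g z) volume y T := by
        apply ContinuousOn.intervalIntegrable
        rw [uIcc_of_le hT]
        exact ((hψcont.mono hsubIcc).sub continuousOn_const).mul (hg_contB.mono hsubIcc)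
      have hFTC : φ T * g T - φ y * g y = ∫ z in y..T, (ψ z - 1) * g z := by
        refine (intervalIntegral.integral_eq_sub_of_hasDerivAt (f := fun w => φ w * g w) (fun z hz => ?_) hFint).symm
        rw [uIcc_of_le hT] at hz
        exact hFd z (hsubIcc hz)
      have hneg : (∫ z in y..T, (1 - ψ z) * g z) = φ y * g y - φ T * g T := by
        have hfun : ∀ z, (1 - ψ z) * g z = -((ψ z - 1) * g z) := fun z => by ring
        simp only [hfun]
        rw [intervalIntegral.integral_neg, ← hFTC]
        ring
      constructor
      · have hptwise : ∀ z ∈ Icc y T, (1 - ε) * g z ≤ (1 - ψ z) * g z := by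
          intro z hz
          have h1 := abs_le.mp (hAε z (le_trans hyA hz.1))
          exact mul_le_mul_of_nonneg_right (by linarith [h1.2]) (hg_pos z).le
        have hmono := intervalIntegral.integral_mono_on hT
          (hgint.const_mul (1 - ε)) hint1 hptwise
        rw [intervalIntegral.integral_const_mul] at hmono
        rw [hneg] at hmono
        exact hmono
      · have hptwise : ∀ z ∈ Icc y T, (1 - ψ z) * g z ≤ (1 + ε) * g z := by
          intro z hz
          have h1 := abs_le.mp (hAε z (le_trans hyA hz.1))
          exact mul_le_mul_of_nonneg_right (by linarith [h1.1]) (hg_pos z).le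
        have hmono := intervalIntegral.integral_mono_on hT
          hint1 (hgint.const_mul (1 + ε)) hptwise
        rw [intervalIntegral.integral_const_mul] at hmono
        rw [hneg] at hmono
        exact hmono
    have l1 : Tendsto (fun T => (1 - ε) * ∫ z in y..T, g z) atTop (𝓝 ((1 - ε) * u y)) :=
      hlim1.const_mul _
    have l3 : Tendsto (fun T => (1 + ε) * ∫ z in y..T, g z) atTop (𝓝 ((1 + ε) * u y)) :=
      hlim1.const_mul _
    have l2 : Tendsto (fun T => φ y * g y - φ T * g T) atTop (𝓝 (φ y * g y)) := by
      have := (tendsto_const_nhds (x := φ y * g y) (f := atTop)).sub hF0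
      simpa using this
    exact ⟨le_of_tendsto_of_tendsto l1 l2 (hineq.mono fun T hT => hT.1),
      le_of_tendsto_of_tendsto l2 l3 (hineq.mono fun T hT => hT.2)⟩
  -- ratio tends to 1
  have hrat : Tendsto (fun y => φ y * g y / u y) atTop (𝓝 1) := by
    rw [tendsto_order]
    constructor
    · intro b hb
      have hε : 0 < (1 - b)/2 := by linarith
      filter_upwards [key _ hε, eventually_ge_atTop B] with y hy hyB
      have hu0 := hu_pos y hyB
      rw [lt_div_iff₀ hu0]
      have h2 : b * u y < (1 - (1 - b)/2) * u y := by
        apply mul_lt_mul_of_pos_right _ hu0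
        linarith
      linarith [hy.1]
    · intro b hb
      have hε : 0 < (b - 1)/2 := by linarith
      filter_upwards [key _ hε, eventually_ge_atTop B] with y hy hyB
      have hu0 := hu_pos y hyB
      rw [div_lt_iff₀ hu0]
      have h2 : (1 + (b - 1)/2) * u y < b * u y := by
        apply mul_lt_mul_of_pos_right _ hu0
        linarith
      linarith [hy.2]
  -- final equality
  have heq : ∀ᶠ y in atTop, (γ * y * deriv u y / u y) / h y = -2 * (φ y * g y / u y) := by
    filter_upwards [eventually_gt_atTop B] with y hyB
    rw [hu_deriv y hyB]
    have hy0 : 0 < y := hBpos y hyB.le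
    have hh0 : 0 < h y := hBhpos y hyB.le
    have hu0 : 0 < u y := hu_pos y hyB.le
    simp only [hφ_def]
    field_simp
  have : Tendsto (fun y => -2 * (φ y * g y / u y)) atTop (𝓝 (-2)) := by
    have := hrat.const_mul (-2 : ℝ)
    simpa using this
  exact this.congr' (heq.mono fun y hy => hy.symm)
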